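/- Let 𝒜 ⊆ (ℤ/2)^{d+r} \ {0} be nonempty with every element having its last r coordinates zero, i.e. 𝒜 = {(a,0) : a ∈ 𝒜'} for some 𝒜' ⊆ (ℤ/2)^d \ {0}. Let n_1,…,n_d ≥ 3, h = gcd(n_1,…,n_d), and let B = Σ_{a∈𝒜'} (A_{K_{n_1}}^{a_1} ⊗ ⋯ ⊗ A_{K_{n_d}}^{a_d}) ⊗ I_{2^r}. Then exp(-i(2π/h)B) = exp(Σ_{a∈𝒜'} (-1)^{w(a)-1}(2π/h)i) · I; in particular every diagonal entry of exp(-i(2π/h)B) has modulus 1 (the graph is periodic with period 2π/h). -/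

import Mathlib

open Kronecker

/-- Adjacency matrix of the complete graph `K_n`, as a complex matrix. -/
noncomputable def Kadj (n : ℕ) : Matrix (Fin n) (Fin n) ℂ :=
  Matrix.of fun i j => if i = j then 0 else 1

/-- Adjacency matrix of `K_2`, indexed by `ZMod 2`. -/
noncomputable def A2 : Matrix (ZMod 2) (ZMod 2) ℂ :=
  Matrix.of fun i j => if i = j then 0 else 1

/-- Kronecker product of a family of matrices. -/
noncomputable def kronC {d : ℕ} {n : Fin d → ℕ}
    (M : ∀ i, Matrix (Fin (n i)) (Fin (n i)) ℂ) :
    Matrix (∀ i, Fin (n i)) (∀ i, Fin (n i)) ℂ :=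
  Matrix.of fun u v => ∏ i, M i (u i) (v i)

/-- `M_a = A_{K_2}^{a_1} ⊗ ⋯ ⊗ A_{K_2}^{a_r}` for `a ∈ (ℤ/2)^r`. -/
noncomputable def cube {r : ℕ} (a : Fin r → ZMod 2) :
    Matrix (Fin r → ZMod 2) (Fin r → ZMod 2) ℂ :=
  Matrix.of fun u v => ∏ j, (if a j = 1 then A2 else 1) (u j) (v j)

/-- `A_{K_{n_1}}^{a_1} ⊗ ⋯ ⊗ A_{K_{n_d}}^{a_d}`. -/
noncomputable def compKron {d : ℕ} (n : Fin d → ℕ) (a : Fin d → ZMod 2) :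
    Matrix (∀ i, Fin (n i)) (∀ i, Fin (n i)) ℂ :=
  kronC fun i => if a i = 1 then Kadj (n i) else 1

/-- Hamming weight. -/
def wt {m : ℕ} (a : Fin m → ZMod 2) : ℕ :=
  (Finset.univ.filter fun i => a i = 1).card

namespace Stmt15Aux

open scoped Nat

/-- All-ones matrix. -/
noncomputable def Jmat (m : ℕ) : Matrix (Fin m) (Fin m) ℂ := Matrix.of fun _ _ => 1

variable {d : ℕ} {n : Fin d → ℕ}

lemma kronC_mul (M N : ∀ i, Matrix (Fin (n i)) (Fin (n i)) ℂ) :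
    kronC M * kronC N = kronC fun i => M i * N i := by
  ext u v
  simp only [kronC, Matrix.mul_apply, Matrix.of_apply, ← Finset.prod_mul_distrib]
  rw [Finset.prod_univ_sum (fun _ => (Finset.univ : Finset _))
    (fun i x => M i (u i) x * N i x (v i)), Fintype.piFinset_univ]

lemma kronC_smul (c : Fin d → ℂ) (M : ∀ i, Matrix (Fin (n i)) (Fin (n i)) ℂ) :
    (kronC fun i => c i • M i) = (∏ i, c i) • kronC M := by
  ext u v
  simp [kronC, Matrix.smul_apply, smul_eq_mul, Finset.prod_mul_distrib]

lemma kronC_one : (kronC fun i : Fin d => (1 : Matrix (Fin (n i)) (Fin (n i)) ℂ)) = 1 := by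
  ext u v
  simp only [kronC, Matrix.of_apply, Matrix.one_apply]
  rw [Fintype.prod_boole]
  simp [funext_iff]

/-- `J`-pattern matrix for a subset `S`. -/
noncomputable def Jd (n : Fin d → ℕ) (S : Finset (Fin d)) :
    Matrix (∀ i, Fin (n i)) (∀ i, Fin (n i)) ℂ :=
  kronC fun i => if i ∈ S then Jmat (n i) else 1

lemma Jd_empty : Jd n ∅ = 1 := by
  simp only [Jd, Finset.notMem_empty, if_false]
  exact kronC_one

lemma Jmat_mul_self (m : ℕ) : Jmat m * Jmat m = (m : ℂ) • Jmat m := by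
  ext u v
  simp [Jmat, Matrix.mul_apply]

lemma Jd_mul (S T : Finset (Fin d)) :
    Jd n S * Jd n T = (∏ i ∈ S ∩ T, (n i : ℂ)) • Jd n (S ∪ T) := by
  rw [Jd, Jd, kronC_mul]
  have key : (fun i => (if i ∈ S then Jmat (n i) else 1) * (if i ∈ T then Jmat (n i) else 1))
      = fun i => (if i ∈ S ∩ T then ((n i : ℂ)) else 1) •
          (if i ∈ S ∪ T then Jmat (n i) else 1) := by
    funext i
    by_cases hS : i ∈ S <;> by_cases hT : i ∈ T <;>
      simp [hS, hT, Finset.mem_inter, Finset.mem_union, Jmat_mul_self]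
  rw [key, kronC_smul]
  rw [Finset.prod_ite_mem, Finset.univ_inter]
  rfl

variable {r : ℕ}

lemma F_mul (S T : Finset (Fin d)) :
    (Jd n S ⊗ₖ (1 : Matrix (Fin r → ZMod 2) (Fin r → ZMod 2) ℂ)) * (Jd n T ⊗ₖ 1)
      = (∏ i ∈ S ∩ T, (n i : ℂ)) • (Jd n (S ∪ T) ⊗ₖ 1) := by
  rw [← Matrix.mul_kronecker_mul, Jd_mul, Matrix.smul_kronecker, mul_one]

lemma F_commute (S T : Finset (Fin d)) :
    Commute (Jd n S ⊗ₖ (1 : Matrix (Fin r → ZMod 2) (Fin r → ZMod 2) ℂ)) (Jd n T ⊗ₖ 1) := by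
  unfold Commute SemiconjBy
  rw [F_mul, F_mul, Finset.inter_comm, Finset.union_comm]

lemma sum_kron {ι : Type*} (s : Finset ι) (A : ι → Matrix (∀ i, Fin (n i)) (∀ i, Fin (n i)) ℂ)
    (B : Matrix (Fin r → ZMod 2) (Fin r → ZMod 2) ℂ) :
    (∑ x ∈ s, A x) ⊗ₖ B = ∑ x ∈ s, (A x ⊗ₖ B) := by
  ext p q
  simp [Matrix.kroneckerMap_apply, Matrix.sum_apply, Finset.sum_mul]

lemma compKron_expand (a : Fin d → ZMod 2) :
    compKron n a = ∑ S ∈ (Finset.univ.filter fun i => a i = 1).powerset,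
      ((-1 : ℂ)) ^ (wt a - S.card) • Jd n S := by
  classical
  set s : Finset (Fin d) := Finset.univ.filter (fun i => a i = 1) with hs
  ext u v
  have hL : compKron n a u v
      = (∏ i ∈ s, ((1 : ℂ) + -(if u i = v i then 1 else 0))) *
          ∏ i ∈ sᶜ, (if u i = v i then (1 : ℂ) else 0) := by
    rw [compKron, kronC, Matrix.of_apply, ← Finset.prod_mul_prod_compl s]
    congr 1
    · refine Finset.prod_congr rfl fun i hi => ?_
      have hai : a i = 1 := by simpa [hs] using hi
      by_cases h : u i = v i <;> simp [hai, Kadj, h]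
    · refine Finset.prod_congr rfl fun i hi => ?_
      have hai : ¬ a i = 1 := by simpa [hs] using Finset.mem_compl.mp hi
      simp [hai, Matrix.one_apply]
  rw [hL, Finset.prod_add, Finset.sum_mul, Matrix.sum_apply]
  refine Finset.sum_congr rfl fun S hS => ?_
  have hSs : S ⊆ s := Finset.mem_powerset.mp hS
  have hneg : (∏ i ∈ s \ S, -(if u i = v i then (1:ℂ) else 0))
      = (-1 : ℂ) ^ (s \ S).card * ∏ i ∈ s \ S, (if u i = v i then (1:ℂ) else 0) := by
    rw [← Finset.prod_const, ← Finset.prod_mul_distrib]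
    refine Finset.prod_congr rfl fun i _ => ?_
    by_cases h : u i = v i <;> simp [h]
  have hcard : (s \ S).card = wt a - S.card := by
    rw [Finset.card_sdiff_of_subset hSs]
    rfl
  have hJd : Jd n S u v = ∏ i ∈ Sᶜ, (if u i = v i then (1:ℂ) else 0) := by
    rw [Jd, kronC, Matrix.of_apply, ← Finset.prod_mul_prod_compl S]
    rw [Finset.prod_eq_one (fun i hi => by simp [hi, Jmat]), one_mul]
    refine Finset.prod_congr rfl fun i hi => ?_
    simp [Finset.mem_compl.mp hi, Matrix.one_apply]
  have hset : (s \ S) ∪ sᶜ = Sᶜ := by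
    ext i
    simp only [Finset.mem_union, Finset.mem_sdiff, Finset.mem_compl]
    by_cases h : i ∈ s
    · simp only [h, not_true, or_false, true_and]
    · simp only [h, not_false_iff, or_true, true_iff]
      exact fun hiS => h (hSs hiS)
  have hdisj : Disjoint (s \ S) sᶜ :=
    Disjoint.mono_left Finset.sdiff_subset disjoint_compl_right
  rw [Matrix.smul_apply, hJd, ← hset, Finset.prod_union hdisj, hneg, hcard]
  simp only [smul_eq_mul, Finset.prod_const_one]
  ring

set_option maxHeartbeats 1600000 in
lemma exp_smul_one {m : Type*} [Fintype m] [DecidableEq m] (z : ℂ) :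
    NormedSpace.exp (z • (1 : Matrix m m ℂ)) = Complex.exp z • (1 : Matrix m m ℂ) := by
  letI : SeminormedRing (Matrix m m ℂ) := Matrix.linftyOpSemiNormedRing
  letI : NormedRing (Matrix m m ℂ) := Matrix.linftyOpNormedRing
  letI : NormedAlgebra ℂ (Matrix m m ℂ) := Matrix.linftyOpNormedAlgebra
  have hsum : Summable (fun k : ℕ => ((k ! : ℂ))⁻¹ * z ^ k) := by
    simpa [smul_eq_mul] using NormedSpace.expSeries_summable' (𝕂 := ℂ) z
  have hterm : ∀ k : ℕ, ((k ! : ℂ))⁻¹ • (z • (1 : Matrix m m ℂ)) ^ k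
      = (((k ! : ℂ))⁻¹ * z ^ k) • (1 : Matrix m m ℂ) := by
    intro k
    rw [smul_pow, one_pow, smul_smul]
  have hexp : ∑' k : ℕ, ((k ! : ℂ))⁻¹ * z ^ k = Complex.exp z := by
    rw [Complex.exp_eq_exp_ℂ, NormedSpace.exp_eq_tsum ℂ]
    simp [smul_eq_mul]
  simp only [NormedSpace.exp_eq_tsum ℂ]
  rw [tsum_congr hterm, Summable.tsum_smul_const hsum, hexp]

set_option maxHeartbeats 1600000 in
lemma exp_eq_one_of_sq {m : Type*} [Fintype m] [DecidableEq m]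
    (E : Matrix m m ℂ) (N : ℂ) (hN : N ≠ 0) (hE : E * E = N • E)
    (z : ℂ) (hz : Complex.exp (z * N) = 1) :
    NormedSpace.exp (z • E) = 1 := by
  letI : SeminormedRing (Matrix m m ℂ) := Matrix.linftyOpSemiNormedRing
  letI : NormedRing (Matrix m m ℂ) := Matrix.linftyOpNormedRing
  letI : NormedAlgebra ℂ (Matrix m m ℂ) := Matrix.linftyOpNormedAlgebra
  have hpow : ∀ k : ℕ, (z • E) ^ (k + 1) = (z ^ (k + 1) * N ^ k) • E := by
    intro k
    induction k with
    | zero => simp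
    | succ k ih =>
      rw [pow_succ, ih, smul_mul_assoc, mul_smul_comm, hE]
      rw [smul_smul, smul_smul]
      congr 1
      ring
  have hgsum : Summable (fun k : ℕ => ((k ! : ℂ))⁻¹ * (z * N) ^ k) := by
    simpa [smul_eq_mul] using NormedSpace.expSeries_summable' (𝕂 := ℂ) (z * N)
  have hgsum1 : Summable (fun k : ℕ => (((k + 1) ! : ℂ))⁻¹ * (z * N) ^ (k + 1)) :=
    (summable_nat_add_iff 1).mpr hgsum
  simp only [NormedSpace.exp_eq_tsum ℂ]
  have hS : Summable (fun k : ℕ => ((k ! : ℂ))⁻¹ • (z • E) ^ k) :=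
    NormedSpace.expSeries_summable' _
  rw [hS.tsum_eq_zero_add]
  have hterm : ∀ k : ℕ, (((k + 1) ! : ℂ))⁻¹ • (z • E) ^ (k + 1)
      = (N⁻¹ * ((((k + 1) ! : ℂ))⁻¹ * (z * N) ^ (k + 1))) • E := by
    intro k
    rw [hpow, smul_smul]
    congr 1
    rw [eq_inv_mul_iff_mul_eq₀ hN, mul_pow, pow_succ]
    ring
  rw [tsum_congr hterm, Summable.tsum_smul_const (hgsum1.mul_left _) E]
  have hshift : ∑' k : ℕ, ((((k + 1) ! : ℂ))⁻¹ * (z * N) ^ (k + 1)) = 0 := by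
    have h0 := hgsum.tsum_eq_zero_add
    have hexp : ∑' k : ℕ, (((k)! : ℂ))⁻¹ * (z * N) ^ k = Complex.exp (z * N) := by
      rw [Complex.exp_eq_exp_ℂ, NormedSpace.exp_eq_tsum ℂ]
      simp [smul_eq_mul]
    rw [hexp, hz] at h0
    simp only [Nat.factorial_zero, Nat.cast_one, inv_one, pow_zero, mul_one] at h0
    exact left_eq_add.mp h0
  rw [tsum_mul_left, hshift, mul_zero, zero_smul, add_zero]
  simp

lemma exp_sum_scalar {ι : Type*} {m : Type*} [Fintype m] [DecidableEq m] (s : Finset ι)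
    (f : ι → Matrix m m ℂ) (g : ι → ℂ)
    (hc : ∀ i ∈ s, ∀ j ∈ s, Commute (f i) (f j))
    (hg : ∀ i ∈ s, NormedSpace.exp (f i) = g i • 1) :
    NormedSpace.exp (∑ i ∈ s, f i) = (∏ i ∈ s, g i) • 1 := by
  classical
  induction s using Finset.induction with
  | empty => simp [NormedSpace.exp_zero]
  | @insert a s ha ih =>
    rw [Finset.sum_insert ha, Finset.prod_insert ha]
    have hcc : Commute (f a) (∑ x ∈ s, f x) :=
      Commute.sum_right _ _ _ fun j hj =>
        hc a (Finset.mem_insert_self a s) j (Finset.mem_insert_of_mem hj)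
    rw [Matrix.exp_add_of_commute _ _ hcc]
    rw [hg a (Finset.mem_insert_self a s),
      ih (fun i hi j hj => hc i (Finset.mem_insert_of_mem hi) j (Finset.mem_insert_of_mem hj))
        (fun i hi => hg i (Finset.mem_insert_of_mem hi))]
    rw [smul_mul_assoc, mul_smul_comm, one_mul, smul_smul]

end Stmt15Aux

open Stmt15Aux in
/-- if every element of the basis has its last `r` coordinates zero
(`𝒜 = 𝒜' × {0}`), then `exp(-i(2π/h)B) = exp(Σ_{a∈𝒜'}(-1)^{w(a)-1}(2π/h)i)·I`, so the
graph is periodic with period `2π/h`, where `h = gcd(n_1,…,n_d)`. -/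
theorem stmt15 (d r : ℕ) (hd : 0 < d) (n : Fin d → ℕ) (hn : ∀ i, 3 ≤ n i)
    (𝒜 : Finset (Fin d → ZMod 2)) (h1 : 𝒜.Nonempty) (h0 : 0 ∉ 𝒜) :
    NormedSpace.exp
        ((-Complex.I * ((2 * Real.pi / ((Finset.univ.gcd n : ℕ) : ℝ) : ℝ) : ℂ)) •
          ∑ a ∈ 𝒜, (compKron n a) ⊗ₖ (1 : Matrix (Fin r → ZMod 2) (Fin r → ZMod 2) ℂ)) =
      Complex.exp (∑ a ∈ 𝒜, (-1 : ℂ) ^ (wt a - 1) *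
          ((2 * Real.pi / ((Finset.univ.gcd n : ℕ) : ℝ) : ℝ) : ℂ) * Complex.I) •
        (1 : Matrix ((∀ i, Fin (n i)) × (Fin r → ZMod 2))
          ((∀ i, Fin (n i)) × (Fin r → ZMod 2)) ℂ) ∧
    ∀ p : (∀ i, Fin (n i)) × (Fin r → ZMod 2),
      ‖(NormedSpace.exp
        ((-Complex.I * ((2 * Real.pi / ((Finset.univ.gcd n : ℕ) : ℝ) : ℝ) : ℂ)) •
          ∑ a ∈ 𝒜, (compKron n a) ⊗ₖ
            (1 : Matrix (Fin r → ZMod 2) (Fin r → ZMod 2) ℂ))) p p‖ = 1 := by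
  classical
  set h : ℕ := Finset.univ.gcd n with hh
  set τ : ℝ := 2 * Real.pi / (h : ℝ) with hτ
  set c : ℂ := -Complex.I * ((τ : ℝ) : ℂ) with hc
  have i0 : Fin d := ⟨0, hd⟩
  have hdvd : ∀ i, h ∣ n i := fun i => Finset.gcd_dvd (Finset.mem_univ i)
  have hne : h ≠ 0 := by
    intro h0'
    have h3 := hn i0
    have := hdvd i0
    rw [h0'] at this
    have := Nat.eq_zero_of_zero_dvd this
    omega
  have hhC : (h : ℂ) ≠ 0 := Nat.cast_ne_zero.mpr hne
  have hwt1 : ∀ a ∈ 𝒜, 1 ≤ wt a := by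
    intro a ha
    by_contra hlt
    have hw0 : wt a = 0 := by omega
    have hfe : (Finset.univ.filter fun j => a j = 1) = ∅ := Finset.card_eq_zero.mp hw0
    have haz : a = 0 := by
      funext i
      have hi : ¬ (a i = 1) := by
        intro hai
        exact Finset.eq_empty_iff_forall_notMem.mp hfe i (by simp [hai])
      have hcase : ∀ x : ZMod 2, x = 0 ∨ x = 1 := by decide
      rcases hcase (a i) with hx | hx
      · exact hx
      · exact absurd hx hi
    exact h0 (haz ▸ ha)
  -- commuting family
  have hcomm : ∀ p ∈ 𝒜.sigma fun a => (Finset.univ.filter fun i => a i = 1).powerset,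
      ∀ q ∈ 𝒜.sigma fun a => (Finset.univ.filter fun i => a i = 1).powerset,
      Commute ((c * (-1 : ℂ) ^ (wt p.1 - p.2.card)) •
          (Jd n p.2 ⊗ₖ (1 : Matrix (Fin r → ZMod 2) (Fin r → ZMod 2) ℂ)))
        ((c * (-1 : ℂ) ^ (wt q.1 - q.2.card)) • (Jd n q.2 ⊗ₖ 1)) := by
    intro p _ q _
    have hFC : Commute (Jd n p.2 ⊗ₖ (1 : Matrix (Fin r → ZMod 2) (Fin r → ZMod 2) ℂ))
        (Jd n q.2 ⊗ₖ 1) := F_commute _ _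
    unfold Commute SemiconjBy at *
    simp only [smul_mul_assoc, mul_smul_comm, smul_smul]
    rw [hFC, mul_comm (c * (-1 : ℂ) ^ (wt p.1 - p.2.card))]
  -- exp of each term
  have hexp : ∀ p ∈ 𝒜.sigma fun a => (Finset.univ.filter fun i => a i = 1).powerset,
      NormedSpace.exp ((c * (-1 : ℂ) ^ (wt p.1 - p.2.card)) •
          (Jd n p.2 ⊗ₖ (1 : Matrix (Fin r → ZMod 2) (Fin r → ZMod 2) ℂ)))
        = (if p.2 = ∅ then Complex.exp (c * (-1 : ℂ) ^ wt p.1) else 1) • 1 := by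
    rintro ⟨a, S⟩ _
    by_cases hSe : S = ∅
    · subst hSe
      rw [Jd_empty, Matrix.one_kronecker_one, exp_smul_one]
      simp
    · have hS1 : S.Nonempty := Finset.nonempty_of_ne_empty hSe
      obtain ⟨i, hi⟩ := hS1
      have hNnat : h ∣ ∏ j ∈ S, n j :=
        dvd_trans (hdvd i) (Finset.dvd_prod_of_mem n hi)
      obtain ⟨mq, hmq⟩ := hNnat
      have hN0 : (∏ j ∈ S, (n j : ℂ)) ≠ 0 := by
        refine Finset.prod_ne_zero_iff.mpr fun j _ => ?_
        exact Nat.cast_ne_zero.mpr (by have := hn j; omega)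
      have hE : (Jd n S ⊗ₖ (1 : Matrix (Fin r → ZMod 2) (Fin r → ZMod 2) ℂ)) * (Jd n S ⊗ₖ 1)
          = (∏ j ∈ S, (n j : ℂ)) • (Jd n S ⊗ₖ 1) := by
        rw [F_mul, Finset.inter_self, Finset.union_self]
      have hzN : Complex.exp ((c * (-1 : ℂ) ^ (wt a - S.card)) * (∏ j ∈ S, (n j : ℂ))) = 1 := by
        have hprod : (∏ j ∈ S, (n j : ℂ)) = ((h : ℂ)) * (mq : ℂ) := by
          rw [← Nat.cast_prod, hmq]
          push_cast
          ring
        have heq : (c * (-1 : ℂ) ^ (wt a - S.card)) * (∏ j ∈ S, (n j : ℂ))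
            = ((((-1 : ℤ)) ^ (wt a - S.card + 1) * (mq : ℤ) : ℤ) : ℂ) *
              (2 * Real.pi * Complex.I) := by
          rw [hprod, hc, hτ]
          push_cast
          field_simp
          ring
        rw [heq]
        exact Complex.exp_int_mul_two_pi_mul_I _
      rw [exp_eq_one_of_sq _ _ hN0 hE _ hzN, if_neg hSe, one_smul]
  have key : NormedSpace.exp (c • ∑ a ∈ 𝒜, (compKron n a) ⊗ₖ
        (1 : Matrix (Fin r → ZMod 2) (Fin r → ZMod 2) ℂ))
      = Complex.exp (∑ a ∈ 𝒜, (-1 : ℂ) ^ (wt a - 1) * ((τ : ℝ) : ℂ) * Complex.I) •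
        (1 : Matrix ((∀ i, Fin (n i)) × (Fin r → ZMod 2))
          ((∀ i, Fin (n i)) × (Fin r → ZMod 2)) ℂ) := by
    have hB : c • ∑ a ∈ 𝒜, (compKron n a) ⊗ₖ
          (1 : Matrix (Fin r → ZMod 2) (Fin r → ZMod 2) ℂ)
        = ∑ p ∈ 𝒜.sigma fun a => (Finset.univ.filter fun i => a i = 1).powerset,
            (c * (-1 : ℂ) ^ (wt p.1 - p.2.card)) • (Jd n p.2 ⊗ₖ 1) := by
      rw [← Finset.sum_sigma' 𝒜 (fun a => (Finset.univ.filter fun i => a i = 1).powerset)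
        (fun a S => (c * (-1 : ℂ) ^ (wt a - S.card)) •
          (Jd n S ⊗ₖ (1 : Matrix (Fin r → ZMod 2) (Fin r → ZMod 2) ℂ))), Finset.smul_sum]
      refine Finset.sum_congr rfl fun a _ => ?_
      rw [compKron_expand (n := n) a, sum_kron, Finset.smul_sum]
      refine Finset.sum_congr rfl fun S _ => ?_
      rw [Matrix.smul_kronecker, smul_smul]
    rw [hB, exp_sum_scalar _ _
      (fun p : Σ _ : Fin d → ZMod 2, Finset (Fin d) =>
        if p.2 = ∅ then Complex.exp (c * (-1 : ℂ) ^ wt p.1) else 1) hcomm hexp]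
    congr 1
    rw [Finset.prod_sigma]
    have hinner : ∀ a ∈ 𝒜, (∏ S ∈ (Finset.univ.filter fun i => a i = 1).powerset,
        (if S = ∅ then Complex.exp (c * (-1 : ℂ) ^ wt a) else 1))
        = Complex.exp ((-1 : ℂ) ^ (wt a - 1) * ((τ : ℝ) : ℂ) * Complex.I) := by
      intro a ha
      rw [Finset.prod_eq_single_of_mem ∅ (Finset.empty_mem_powerset _)
        (fun S _ hne' => if_neg hne'), if_pos rfl]
      congr 1
      have h1le := hwt1 a ha
      have hpowid : (-1 : ℂ) ^ wt a = -(-1 : ℂ) ^ (wt a - 1) := by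
        conv_lhs => rw [show wt a = (wt a - 1) + 1 by omega]
        rw [pow_succ]
        ring
      rw [hpowid, hc]
      ring
    rw [Finset.prod_congr rfl hinner, ← Complex.exp_sum]
  constructor
  · exact key
  · intro p
    rw [key]
    simp only [Matrix.smul_apply, Matrix.one_apply_eq, smul_eq_mul, mul_one]
    have hZ : (∑ a ∈ 𝒜, (-1 : ℂ) ^ (wt a - 1) * ((τ : ℝ) : ℂ) * Complex.I)
        = (((∑ a ∈ 𝒜, (-1 : ℝ) ^ (wt a - 1) * τ) : ℝ) : ℂ) * Complex.I := by
      push_cast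
      rw [Finset.sum_mul]
    rw [hZ]
    exact Complex.norm_exp_ofReal_mul_I _
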